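/- Let H be a complex linear operator on ℂⁿ. If all orbits {exp(-itH)ψ : t ∈ ℝ} are bounded sets for every initial condition ψ ∈ ℂⁿ, then H is diagonalizable and has real spectrum. -/

import Mathlib

open Matrix NormedSpace

lemma hasSum_exp_mulVec {n : ℕ} (A : Matrix (Fin n) (Fin n) ℂ) (v : Fin n → ℂ) :
    HasSum (fun k : ℕ => ((Nat.factorial k : ℂ))⁻¹ • (A ^ k).mulVec v) ((exp A).mulVec v) := by
  letI : SeminormedRing (Matrix (Fin n) (Fin n) ℂ) := Matrix.linftyOpSemiNormedRing
  letI : NormedRing (Matrix (Fin n) (Fin n) ℂ) := Matrix.linftyOpNormedRing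
  letI : NormedAlgebra ℂ (Matrix (Fin n) (Fin n) ℂ) := Matrix.linftyOpNormedAlgebra
  have h := NormedSpace.exp_series_hasSum_exp' (𝕂 := ℂ) A
  let L : Matrix (Fin n) (Fin n) ℂ →ₗ[ℂ] (Fin n → ℂ) :=
    { toFun := fun M => M.mulVec v
      map_add' := fun M N => Matrix.add_mulVec M N v
      map_smul' := fun c M => Matrix.smul_mulVec c M v }
  have hL : Continuous L := L.continuous_of_finiteDimensional
  have h2 := h.map L hL
  exact h2.congr_fun fun k => (L.map_smul _ _).symm

lemma exp_mulVec_eigen {n : ℕ} {A : Matrix (Fin n) (Fin n) ℂ} {v : Fin n → ℂ} {c : ℂ}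
    (h : A.mulVec v = c • v) : (exp A).mulVec v = Complex.exp c • v := by
  have hpow : ∀ k : ℕ, (A ^ k).mulVec v = c ^ k • v := by
    intro k
    induction k with
    | zero => simp [Matrix.one_mulVec]
    | succ k ih =>
        rw [pow_succ, ← Matrix.mulVec_mulVec, h, Matrix.mulVec_smul, ih, smul_smul, ← pow_succ']
  have h1 := hasSum_exp_mulVec A v
  have h2 : HasSum (fun k : ℕ => ((Nat.factorial k : ℂ))⁻¹ • c ^ k • v) (Complex.exp c • v) := by
    have := (NormedSpace.exp_series_hasSum_exp' (𝕂 := ℂ) c).smul_const v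
    rw [← Complex.exp_eq_exp_ℂ] at this
    simpa [smul_smul] using this
  simp_rw [hpow] at h1
  exact h1.unique h2

lemma exp_mulVec_jordan {n : ℕ} {A : Matrix (Fin n) (Fin n) ℂ} {v w : Fin n → ℂ} {c : ℂ}
    (hv : A.mulVec v = c • v + w) (hw : A.mulVec w = c • w) :
    (exp A).mulVec v = Complex.exp c • v + Complex.exp c • w := by
  have hpoww : ∀ k : ℕ, (A ^ k).mulVec w = c ^ k • w := by
    intro k
    induction k with
    | zero => simp [Matrix.one_mulVec]
    | succ k ih =>
        rw [pow_succ, ← Matrix.mulVec_mulVec, hw, Matrix.mulVec_smul, ih, smul_smul, ← pow_succ']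
  have hpow : ∀ k : ℕ, (A ^ k).mulVec v = c ^ k • v + ((k : ℂ) * c ^ (k - 1)) • w := by
    intro k
    induction k with
    | zero => simp [Matrix.one_mulVec]
    | succ k ih =>
        have hc : c * ((k:ℂ) * c ^ (k-1)) + c ^ k = ((k:ℂ)+1) * c ^ k := by
          cases k with
          | zero => simp
          | succ j => rw [Nat.add_sub_cancel]; push_cast; ring
        rw [pow_succ, ← Matrix.mulVec_mulVec, hv, Matrix.mulVec_add, Matrix.mulVec_smul, ih,
          hpoww, Nat.add_sub_cancel]
        push_cast
        rw [smul_add, smul_smul, smul_smul, add_assoc, ← add_smul, hc, ← pow_succ']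
  have h1 := hasSum_exp_mulVec A v
  simp_rw [hpow] at h1
  have h2 : HasSum (fun k : ℕ => ((Nat.factorial k : ℂ))⁻¹ • c ^ k • v) (Complex.exp c • v) := by
    have := (NormedSpace.exp_series_hasSum_exp' (𝕂 := ℂ) c).smul_const v
    rw [← Complex.exp_eq_exp_ℂ] at this
    simpa [smul_smul] using this
  have h3 : HasSum (fun k : ℕ => ((Nat.factorial k : ℂ))⁻¹ • ((k : ℂ) * c ^ (k - 1)) • w)
      (Complex.exp c • w) := by
    have hg : HasSum (fun k : ℕ => ((Nat.factorial k : ℂ))⁻¹ • c ^ k • w) (Complex.exp c • w) := by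
      have := (NormedSpace.exp_series_hasSum_exp' (𝕂 := ℂ) c).smul_const w
      rw [← Complex.exp_eq_exp_ℂ] at this
      simpa [smul_smul] using this
    set f : ℕ → (Fin n → ℂ) := fun k => ((Nat.factorial k : ℂ))⁻¹ • ((k : ℂ) * c ^ (k - 1)) • w
      with hf
    have hshift : (fun k : ℕ => f (k + 1)) = fun k => ((Nat.factorial k : ℂ))⁻¹ • c ^ k • w := by
      funext k
      simp only [hf, smul_smul]
      congr 1
      rw [Nat.factorial_succ]
      push_cast
      have hk : ((k:ℂ)+1) ≠ 0 := Nat.cast_add_one_ne_zero k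
      have hkf : ((Nat.factorial k : ℂ)) ≠ 0 := Nat.cast_ne_zero.mpr (Nat.factorial_ne_zero k)
      field_simp
    have := (hasSum_nat_add_iff (f := f) 1).mp (hshift ▸ hg)
    simpa [hf] using this
  exact h1.unique ((h2.add h3).congr_fun fun k => by rw [smul_add])

lemma im_eq_zero_of_bounded {n : ℕ} {H : Matrix (Fin n) (Fin n) ℂ}
    (hbdd : ∀ ψ : Fin n → ℂ,
      Bornology.IsBounded
        {x : Fin n → ℂ | ∃ t : ℝ,
          x = (NormedSpace.exp ((-(Complex.I * (t : ℂ))) • H)).mulVec ψ})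
    {μ : ℂ} {v : Fin n → ℂ} (hv : v ≠ 0) (heig : H.mulVec v = μ • v) : μ.im = 0 := by
  obtain ⟨C, hC⟩ := (hbdd v).exists_norm_le
  have key : ∀ t : ℝ, Real.exp (t * μ.im) * ‖v‖ ≤ C := by
    intro t
    have h1 : ((-(Complex.I * (t : ℂ))) • H).mulVec v = (-(Complex.I * (t : ℂ)) * μ) • v := by
      rw [Matrix.smul_mulVec, heig, smul_smul]
    have h2 := exp_mulVec_eigen h1
    have h3 := hC _ ⟨t, rfl⟩
    rw [h2, norm_smul, Complex.norm_exp] at h3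
    have hre : (-(Complex.I * (t : ℂ)) * μ).re = t * μ.im := by
      simp [Complex.mul_re]
    rwa [hre] at h3
  have hvpos : 0 < ‖v‖ := norm_pos_iff.mpr hv
  by_contra him
  have key2 : ∀ s : ℝ, Real.exp s * ‖v‖ ≤ C := by
    intro s
    have := key (s / μ.im)
    rwa [div_mul_cancel₀ _ him] at this
  have h0 : ‖v‖ ≤ C := by simpa using key2 0
  have hCpos : 0 < C := lt_of_lt_of_le hvpos h0
  have h4 := key2 (C / ‖v‖)
  have h5 := Real.add_one_le_exp (C / ‖v‖)
  have h6 : (C / ‖v‖ + 1) * ‖v‖ ≤ Real.exp (C / ‖v‖) * ‖v‖ :=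
    mul_le_mul_of_nonneg_right h5 (le_of_lt hvpos)
  have h7 : (C / ‖v‖) * ‖v‖ = C := div_mul_cancel₀ C (ne_of_gt hvpos)
  nlinarith

lemma jordan_w_eq_zero_of_bounded {n : ℕ} {H : Matrix (Fin n) (Fin n) ℂ}
    (hbdd : ∀ ψ : Fin n → ℂ,
      Bornology.IsBounded
        {x : Fin n → ℂ | ∃ t : ℝ,
          x = (NormedSpace.exp ((-(Complex.I * (t : ℂ))) • H)).mulVec ψ})
    {μ : ℂ} {v w : Fin n → ℂ} (heigv : H.mulVec v = μ • v + w)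
    (heigw : H.mulVec w = μ • w) (him : μ.im = 0) : w = 0 := by
  by_contra hw
  have hwpos : 0 < ‖w‖ := norm_pos_iff.mpr hw
  obtain ⟨C, hC⟩ := (hbdd v).exists_norm_le
  have key : ∀ t : ℝ, |t| * ‖w‖ - ‖v‖ ≤ C := by
    intro t
    set c : ℂ := -(Complex.I * (t : ℂ)) * μ with hc
    set w' : Fin n → ℂ := (-(Complex.I * (t : ℂ))) • w with hw'
    have h1 : ((-(Complex.I * (t : ℂ))) • H).mulVec v = c • v + w' := by
      rw [Matrix.smul_mulVec, heigv, smul_add, smul_smul, hc, hw']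
    have h2 : ((-(Complex.I * (t : ℂ))) • H).mulVec w' = c • w' := by
      rw [hw', Matrix.mulVec_smul, Matrix.smul_mulVec, heigw, smul_smul, smul_smul, hc,
        smul_smul]
      congr 1
      ring
    have h3 := exp_mulVec_jordan h1 h2
    have h4 := hC _ ⟨t, rfl⟩
    rw [h3] at h4
    have habs : ‖Complex.exp c‖ = 1 := by
      rw [Complex.norm_exp, hc]
      simp [Complex.mul_re, him]
    have h5 : ‖Complex.exp c • v + Complex.exp c • w'‖ = ‖v + w'‖ := by
      rw [← smul_add, norm_smul, habs, one_mul]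
    rw [h5] at h4
    have h6 : ‖w'‖ - ‖v‖ ≤ ‖v + w'‖ := by
      have h := norm_sub_le (v + w') v
      have heq : v + w' - v = w' := by abel
      rw [heq] at h
      linarith
    have h7 : ‖w'‖ = |t| * ‖w‖ := by
      rw [hw', norm_smul]
      simp [Complex.norm_def, Complex.normSq_apply]
    linarith
  have h0 : ‖v‖ ≤ C := by
    have := hC _ ⟨0, rfl⟩
    have h00 : ((-(Complex.I * ((0:ℝ) : ℂ))) • H) = 0 := by push_cast; simp
    rwa [h00, NormedSpace.exp_zero, Matrix.one_mulVec] at this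
  have ht := key ((C + ‖v‖ + 1) / ‖w‖)
  have htpos : 0 ≤ (C + ‖v‖ + 1) / ‖w‖ :=
    div_nonneg (by linarith [norm_nonneg v]) hwpos.le
  rw [abs_of_nonneg htpos, div_mul_cancel₀ _ (ne_of_gt hwpos)] at ht
  linarith

/-- If every orbit `{exp(-itH) ψ : t ∈ ℝ}` of the flow of a complex linear operator `H` on
`ℂⁿ` is a bounded set, then `H` is diagonalizable with real spectrum. -/
theorem orbits_bounded_imp_diagonalizable_real_spectrum
    {n : ℕ} (H : Matrix (Fin n) (Fin n) ℂ)
    (hbdd : ∀ ψ : Fin n → ℂ,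
      Bornology.IsBounded
        {x : Fin n → ℂ | ∃ t : ℝ,
          x = (NormedSpace.exp ((-(Complex.I * (t : ℂ))) • H)).mulVec ψ}) :
    ∃ P D : Matrix (Fin n) (Fin n) ℂ,
      IsUnit P.det ∧ D.IsDiag ∧ H = P * D * P⁻¹ ∧ ∀ i, (D i i).im = 0 := by
  classical
  set f : Module.End ℂ (Fin n → ℂ) := Matrix.mulVecLin H with hfdef
  have hfapp : ∀ x : Fin n → ℂ, f x = H.mulVec x := fun x => rfl
  -- every generalized eigenvector is an eigenvector
  have key : ∀ (μ : ℂ) (k : ℕ) (x : Fin n → ℂ),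
      ((f - μ • 1) ^ k) x = 0 → (f - μ • 1) x = 0 := by
    intro μ k
    induction k with
    | zero => intro x hx; simp only [pow_zero, Module.End.one_apply] at hx; simp [hx]
    | succ k ih =>
        intro x hx
        set y : Fin n → ℂ := (f - μ • 1) x with hy
        have hky : ((f - μ • 1) ^ k) y = 0 := by
          rw [hy, ← Module.End.mul_apply, ← pow_succ]
          exact hx
        have hy0 : (f - μ • 1) y = 0 := ih y hky
        by_cases hyz : y = 0
        · exact hyz
        · -- y is a genuine eigenvector
          have heigy : H.mulVec y = μ • y := by
            have : f y - μ • y = 0 := by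
              simpa [LinearMap.sub_apply, LinearMap.smul_apply, Module.End.one_apply] using hy0
            have := sub_eq_zero.mp this
            rwa [hfapp] at this
          have him : μ.im = 0 := im_eq_zero_of_bounded hbdd hyz heigy
          have heigx : H.mulVec x = μ • x + y := by
            rw [← hfapp]
            rw [hy]
            simp [LinearMap.sub_apply, LinearMap.smul_apply, Module.End.one_apply]
          exact jordan_w_eq_zero_of_bounded hbdd heigx heigy him
  have hmax : ∀ μ : ℂ, f.maxGenEigenspace μ ≤ f.eigenspace μ := by
    intro μ x hx
    rw [Module.End.mem_maxGenEigenspace] at hx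
    obtain ⟨k, hk⟩ := hx
    have := key μ k x hk
    rw [Module.End.mem_eigenspace_iff]
    have h2 : f x - μ • x = 0 := by
      simpa [LinearMap.sub_apply, LinearMap.smul_apply, Module.End.one_apply] using this
    exact sub_eq_zero.mp h2
  have htop : ⨆ μ : ℂ, f.eigenspace μ = ⊤ := by
    refine top_unique ?_
    rw [← Module.End.iSup_maxGenEigenspace_eq_top f]
    exact iSup_mono hmax
  have hInt : DirectSum.IsInternal f.eigenspace :=
    DirectSum.isInternal_submodule_of_iSupIndep_of_iSup_eq_top f.eigenspaces_iSupIndep htop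
  let bs : ∀ μ : ℂ, Module.Basis (Fin (Module.finrank ℂ (f.eigenspace μ))) ℂ (f.eigenspace μ) :=
    fun μ => Module.finBasis ℂ _
  let b := hInt.collectedBasis bs
  haveI : Fintype (Σ μ : ℂ, Fin (Module.finrank ℂ (f.eigenspace μ))) :=
    FiniteDimensional.fintypeBasisIndex b
  have hcard : Fintype.card (Σ μ : ℂ, Fin (Module.finrank ℂ (f.eigenspace μ))) = n := by
    have h1 := Module.finrank_eq_card_basis b
    have h2 : Module.finrank ℂ (Fin n → ℂ) = n := by simp
    omega
  let e := Fintype.equivFinOfCardEq hcard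
  let b' := b.reindex e
  let μfun : Fin n → ℂ := fun i => (e.symm i).1
  have hb' : ∀ i, H.mulVec (b' i) = μfun i • b' i := by
    intro i
    have hm := hInt.collectedBasis_mem bs (e.symm i)
    rw [Module.End.mem_eigenspace_iff] at hm
    have hbi : b' i = b (e.symm i) := b.reindex_apply e i
    rw [hbi, ← hfapp]
    exact hm
  set P : Matrix (Fin n) (Fin n) ℂ := (Pi.basisFun ℂ (Fin n)).toMatrix b' with hPdef
  set D : Matrix (Fin n) (Fin n) ℂ := Matrix.diagonal μfun with hDdef
  have hPentry : ∀ r i, P r i = b' i r := by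
    intro r i
    rw [hPdef, Module.Basis.toMatrix_apply, Pi.basisFun_repr]
  have hPunit : IsUnit P.det := by
    letI := (Pi.basisFun ℂ (Fin n)).invertibleToMatrix b'
    exact Matrix.isUnit_det_of_invertible _
  have hPD : H * P = P * D := by
    ext r i
    have h1 : (H * P) r i = H.mulVec (b' i) r := by
      simp only [Matrix.mul_apply, Matrix.mulVec, dotProduct]
      exact Finset.sum_congr rfl fun j _ => by rw [hPentry j i]
    rw [h1, hb' i]
    have h2 : (P * D) r i = P r i * μfun i := by rw [hDdef, Matrix.mul_diagonal]
    rw [h2, hPentry]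
    rw [Pi.smul_apply, smul_eq_mul, mul_comm]
  refine ⟨P, D, hPunit, Matrix.isDiag_diagonal μfun, ?_, ?_⟩
  · have hinv : P * P⁻¹ = 1 := Matrix.mul_nonsing_inv P hPunit
    calc H = H * (P * P⁻¹) := by rw [hinv, mul_one]
    _ = H * P * P⁻¹ := by rw [Matrix.mul_assoc]
    _ = P * D * P⁻¹ := by rw [hPD]
  · intro i
    have hDii : D i i = μfun i := by rw [hDdef, Matrix.diagonal_apply_eq]
    rw [hDii]
    exact im_eq_zero_of_bounded hbdd (b'.ne_zero i) (hb' i)
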